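/- arXiv:0708.1901 — 2 statements merged into one kernel-verified Lean document; each statement's English description precedes it below -/
import Mathlib

section
/- For every N ∈ ℕ there exists B₀ ≥ 1 such that for all B ≥ B₀ the following holds: every finitely supported probability measure ξ* on [0,1] that maximizes the standardized maximin D-criterion Φ_B(ξ) = inf_{β∈[1,B]} e²β² ∫₀¹ x² e^{−2βx} dξ(x) over all finitely supported probability measures ξ on [0,1] is supported at more than N points. -/
open scoped BigOperators
open Filter

/-- An approximate design on `ℝ`: a finitely supported probability measure,
given by its support points and positive weights summing to one. -/
structure Design where
  support : Finset ℝ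
  w : ℝ → ℝ
  w_pos : ∀ x ∈ support, 0 < w x
  w_zero : ∀ x ∉ support, w x = 0
  sum_one : ∑ x ∈ support, w x = 1

/-- Information `M(ξ,β) = ∫₀¹ x² e^{−2βx} dξ(x)` of a design in the one-parameter
exponential model `η(x,β) = e^{−βx}`. -/
noncomputable def expInfo (ξ : Design) (β : ℝ) : ℝ :=
  ∑ x ∈ ξ.support, ξ.w x * (x ^ 2 * Real.exp (-2 * β * x))

/-- Standardized maximin criterion `Φ_B(ξ) = inf_{β∈[1,B]} e²β² M(ξ,β)` for the
one-parameter exponential model. -/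
noncomputable def PhiMaximin (B : ℝ) (ξ : Design) : ℝ :=
  ⨅ β : Set.Icc (1 : ℝ) B, Real.exp 2 * (β : ℝ) ^ 2 * expInfo ξ (β : ℝ)

-- g(t) = e^2 t^2 e^{-2t} ≤ ε when t outside (√ε/e, 4 - log ε)
lemma g_small (ε t : ℝ) (hε0 : 0 < ε) (hε1 : ε ≤ 1) (ht : 0 ≤ t)
    (h : t ≤ Real.sqrt ε / Real.exp 1 ∨ 4 - Real.log ε ≤ t) :
    Real.exp 2 * t ^ 2 * Real.exp (-2 * t) ≤ ε := by
  rcases h with h | h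
  · have h1 : Real.exp (-2 * t) ≤ 1 := by
      rw [Real.exp_le_one_iff]; nlinarith
    have ht2 : t ^ 2 ≤ ε / Real.exp 2 := by
      have hpos : (0:ℝ) < Real.exp 1 := Real.exp_pos 1
      have : t ^ 2 ≤ (Real.sqrt ε / Real.exp 1) ^ 2 := by
        apply pow_le_pow_left₀ ht h
      calc t ^ 2 ≤ (Real.sqrt ε / Real.exp 1) ^ 2 := this
        _ = ε / Real.exp 2 := by
            have he : Real.exp 1 ^ 2 = Real.exp 2 := by
              rw [← Real.exp_nat_mul]; norm_num
            rw [div_pow, Real.sq_sqrt hε0.le, he]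
    calc Real.exp 2 * t ^ 2 * Real.exp (-2 * t) ≤ Real.exp 2 * (ε / Real.exp 2) * 1 := by
          apply mul_le_mul (mul_le_mul_of_nonneg_left ht2 (Real.exp_pos 2).le) h1
            (Real.exp_pos _).le
          positivity
      _ = ε := by field_simp
  · -- t ≥ 4 - log ε ≥ 4
    have hlog : Real.log ε ≤ 0 := Real.log_nonpos hε0.le hε1
    have ht4 : 4 ≤ t := by linarith
    have hsq : t ^ 2 ≤ 4 * Real.exp t := by
      have h1 : t / 2 ≤ Real.exp (t / 2) := by
        have := Real.add_one_le_exp (t / 2); linarith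
      have h2 : (t / 2) ^ 2 ≤ Real.exp (t / 2) ^ 2 := by
        apply pow_le_pow_left₀ (by linarith) h1
      rw [← Real.exp_nat_mul] at h2
      norm_num at h2
      rw [show 2 * (t/2) = t by ring] at h2
      calc t ^ 2 = 4 * ((t/2)^2) := by ring
        _ ≤ 4 * Real.exp t := by nlinarith [h2]
    have key : Real.exp 2 * t ^ 2 * Real.exp (-2 * t) ≤ 4 * Real.exp (2 - t) := by
      have := Real.exp_pos (-2 * t)
      calc Real.exp 2 * t ^ 2 * Real.exp (-2 * t)
          ≤ Real.exp 2 * (4 * Real.exp t) * Real.exp (-2 * t) := by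
            apply mul_le_mul_of_nonneg_right _ this.le
            exact mul_le_mul_of_nonneg_left hsq (Real.exp_pos 2).le
        _ = 4 * Real.exp (2 - t) := by
            rw [show Real.exp 2 * (4 * Real.exp t) * Real.exp (-2 * t)
                = 4 * (Real.exp 2 * (Real.exp t * Real.exp (-2 * t))) by ring,
              ← Real.exp_add, ← Real.exp_add]
            ring_nf
    have h2t : Real.exp (2 - t) ≤ Real.exp (-2) * ε := by
      have : 2 - t ≤ -2 + Real.log ε := by linarith
      calc Real.exp (2 - t) ≤ Real.exp (-2 + Real.log ε) := Real.exp_le_exp.mpr this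
        _ = Real.exp (-2) * ε := by rw [Real.exp_add, Real.exp_log hε0]
    have he2 : (4:ℝ) * Real.exp (-2) ≤ 1 := by
      rw [Real.exp_neg]
      have h4 : (4:ℝ) ≤ Real.exp 2 := by
        have := Real.add_one_le_exp 1
        have h2 : Real.exp 2 = Real.exp 1 * Real.exp 1 := by
          rw [← Real.exp_add]; norm_num
        nlinarith [Real.exp_pos 1]
      rw [mul_inv_le_iff₀ (by positivity)]
      linarith
    calc Real.exp 2 * t ^ 2 * Real.exp (-2 * t) ≤ 4 * (Real.exp (-2) * ε) := by
          calc Real.exp 2 * t ^ 2 * Real.exp (-2 * t) ≤ 4 * Real.exp (2 - t) := key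
            _ ≤ 4 * (Real.exp (-2) * ε) := by linarith
      _ ≤ ε := by nlinarith

lemma exists_good_design (B : ℝ) (hB : 1 ≤ B) :
    ∃ ξ : Design, ↑ξ.support ⊆ Set.Icc (0:ℝ) 1 ∧
      Real.exp (2 - 2 * Real.exp 1) / (Real.log B + 1) ≤ PhiMaximin B ξ := by
  classical
  have hu : 0 ≤ Real.log B := Real.log_nonneg hB
  set n : ℕ := ⌊Real.log B⌋₊ + 1 with hn
  have hn0 : 0 < n := Nat.succ_pos _
  have hinj : Function.Injective (fun j : ℕ => Real.exp (-(j : ℝ))) := by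
    intro a b hab
    simp only [Real.exp_eq_exp, neg_inj, Nat.cast_inj] at hab
    exact hab
  set S : Finset ℝ := (Finset.range n).image (fun j : ℕ => Real.exp (-(j : ℝ))) with hS
  have hcard : S.card = n := by
    rw [hS, Finset.card_image_of_injective _ hinj, Finset.card_range]
  set ξ : Design :=
    { support := S
      w := fun x => if x ∈ S then (n : ℝ)⁻¹ else 0
      w_pos := by
        intro x hx
        simp only [if_pos hx]
        positivity
      w_zero := by intro x hx; simp only [if_neg hx]
      sum_one := by
        rw [Finset.sum_congr rfl (fun x hx => if_pos hx), Finset.sum_const, hcard,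
          nsmul_eq_mul, mul_inv_cancel₀ (by exact_mod_cast hn0.ne')] } with hξ
  refine ⟨ξ, ?_, ?_⟩
  · intro x hx
    simp only [hξ, hS, Finset.coe_image, Set.mem_image] at hx
    obtain ⟨j, _, rfl⟩ := hx
    constructor
    · exact (Real.exp_pos _).le
    · exact Real.exp_le_one_iff.mpr (neg_nonpos.mpr (Nat.cast_nonneg j))
  · have : Nonempty (Set.Icc (1:ℝ) B) := ⟨⟨1, le_refl 1, hB⟩⟩
    apply le_ciInf
    rintro ⟨β, hβ1, hβB⟩
    simp only
    have hβ0 : 0 < β := lt_of_lt_of_le one_pos hβ1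
    have hlβ : 0 ≤ Real.log β := Real.log_nonneg hβ1
    set j : ℕ := ⌊Real.log β⌋₊ with hj
    have hjn : j < n := by
      rw [hn]
      exact Nat.lt_succ_of_le (Nat.floor_le_floor (Real.log_le_log hβ0 hβB))
    set xj : ℝ := Real.exp (-(j : ℝ)) with hxj
    have hxjS : xj ∈ S := by
      rw [hS]
      exact Finset.mem_image.mpr ⟨j, Finset.mem_range.mpr hjn, rfl⟩
    set t : ℝ := β * xj with htdef
    have ht_eq : t = Real.exp (Real.log β - (j:ℝ)) := by
      rw [Real.exp_sub, Real.exp_log hβ0, htdef, hxj, Real.exp_neg, div_eq_mul_inv]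
    have ht1 : 1 ≤ t := by
      rw [ht_eq]
      have : (0:ℝ) ≤ Real.log β - j := by
        have := Nat.floor_le hlβ
        rw [← hj] at this
        linarith
      calc (1:ℝ) = Real.exp 0 := Real.exp_zero.symm
        _ ≤ _ := Real.exp_le_exp.mpr this
    have hte : t ≤ Real.exp 1 := by
      rw [ht_eq]
      apply Real.exp_le_exp.mpr
      have := Nat.lt_floor_add_one (Real.log β)
      rw [← hj] at this
      linarith
    -- single-term lower bound for expInfo
    have hsingle : (n:ℝ)⁻¹ * (xj ^ 2 * Real.exp (-2 * β * xj)) ≤ expInfo ξ β := by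
      rw [expInfo]
      have := Finset.single_le_sum
        (f := fun x => ξ.w x * (x ^ 2 * Real.exp (-2 * β * x)))
        (fun x hx => by
          have := ξ.w_pos x hx
          positivity) hxjS
      calc (n:ℝ)⁻¹ * (xj ^ 2 * Real.exp (-2 * β * xj))
          = ξ.w xj * (xj ^ 2 * Real.exp (-2 * β * xj)) := by
            simp only [hξ, if_pos hxjS]
        _ ≤ _ := this
    have ht0 : 0 < t := lt_of_lt_of_le one_pos ht1
    have hgt : Real.exp (2 - 2 * Real.exp 1) ≤ Real.exp 2 * t ^ 2 * Real.exp (-2 * t) := by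
      have h1 : Real.exp (-(2 * Real.exp 1)) ≤ Real.exp (-2 * t) := by
        apply Real.exp_le_exp.mpr; nlinarith
      have h2 : (1:ℝ) ≤ t ^ 2 := by nlinarith
      calc Real.exp (2 - 2 * Real.exp 1) = Real.exp 2 * Real.exp (-(2 * Real.exp 1)) := by
            rw [← Real.exp_add]; ring_nf
        _ ≤ Real.exp 2 * (t ^ 2 * Real.exp (-2 * t)) := by
            apply mul_le_mul_of_nonneg_left _ (Real.exp_pos 2).le
            calc Real.exp (-(2 * Real.exp 1)) ≤ Real.exp (-2 * t) := h1
              _ = 1 * Real.exp (-2 * t) := (one_mul _).symm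
              _ ≤ t ^ 2 * Real.exp (-2 * t) :=
                  mul_le_mul_of_nonneg_right h2 (Real.exp_pos _).le
        _ = Real.exp 2 * t ^ 2 * Real.exp (-2 * t) := by ring
    have hnle : (n : ℝ) ≤ Real.log B + 1 := by
      rw [hn]
      push_cast
      have := Nat.floor_le hu
      linarith
    calc Real.exp (2 - 2 * Real.exp 1) / (Real.log B + 1)
        ≤ Real.exp (2 - 2 * Real.exp 1) / (n : ℝ) := by
          gcongr
      _ = (n:ℝ)⁻¹ * Real.exp (2 - 2 * Real.exp 1) := by rw [div_eq_inv_mul]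
      _ ≤ (n:ℝ)⁻¹ * (Real.exp 2 * t ^ 2 * Real.exp (-2 * t)) := by
          gcongr
      _ = Real.exp 2 * β ^ 2 * ((n:ℝ)⁻¹ * (xj ^ 2 * Real.exp (-2 * β * xj))) := by
          simp only [htdef]
          rw [show -2 * (β * xj) = -2 * β * xj by ring]
          ring
      _ ≤ Real.exp 2 * β ^ 2 * expInfo ξ β := by
          apply mul_le_mul_of_nonneg_left hsingle (by positivity)

lemma phi_le (B : ℝ) (N : ℕ) (ξ : Design)
    (hsupp : ↑ξ.support ⊆ Set.Icc (0:ℝ) 1) (hcard : ξ.support.card ≤ N)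
    (ε : ℝ) (hε0 : 0 < ε) (hε1 : ε ≤ 1)
    (hBR : ((4 - Real.log ε) / (Real.sqrt ε / Real.exp 1)) ^ (N + 1) ≤ B) :
    PhiMaximin B ξ ≤ ε := by
  classical
  set a : ℝ := Real.sqrt ε / Real.exp 1 with ha_def
  set b : ℝ := 4 - Real.log ε with hb_def
  set R : ℝ := b / a with hR_def
  have ha0 : 0 < a := by
    rw [ha_def]
    exact div_pos (Real.sqrt_pos.mpr hε0) (Real.exp_pos 1)
  have hb4 : 4 ≤ b := by
    rw [hb_def]
    have := Real.log_nonpos hε0.le hε1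
    linarith
  have ha1 : a < 1 := by
    rw [ha_def, div_lt_one (Real.exp_pos 1)]
    calc Real.sqrt ε ≤ 1 := Real.sqrt_le_one.mpr hε1
      _ < Real.exp 1 := by
          have := Real.add_one_le_exp 1; linarith
  have hR1 : 1 < R := by
    rw [hR_def, lt_div_iff₀ ha0, one_mul]
    linarith
  have hba : b = R * a := by
    rw [hR_def, div_mul_cancel₀ _ ha0.ne']
  -- uniqueness of the "bad" exponent for each x
  have huniq : ∀ x : ℝ, ∀ k k' : ℕ,
      (a < R ^ k * x ∧ R ^ k * x < b) → (a < R ^ k' * x ∧ R ^ k' * x < b) → k = k' := by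
    intro x k k' hk hk'
    have hx0 : 0 < x := by
      by_contra hx
      push_neg at hx
      have : R ^ k * x ≤ 0 := mul_nonpos_of_nonneg_of_nonpos (by positivity) hx
      linarith [hk.1]
    have key : ∀ m m' : ℕ, (a < R ^ m * x ∧ R ^ m * x < b) →
        (a < R ^ m' * x ∧ R ^ m' * x < b) → m' ≤ m := by
      intro m m' hm hm'
      have h1 : R ^ m' * x < R ^ (m + 1) * x := by
        calc R ^ m' * x < b := hm'.2
          _ = R * a := hba
          _ < R * (R ^ m * x) := by
              apply mul_lt_mul_of_pos_left hm.1 (by linarith)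
          _ = R ^ (m + 1) * x := by ring
      have h2 : R ^ m' < R ^ (m + 1) := lt_of_mul_lt_mul_right (by linarith [h1]) hx0.le
      have := (pow_lt_pow_iff_right₀ hR1).mp h2
      omega
    exact le_antisymm (key k' k hk' hk) (key k k' hk hk')
  -- the set of "spoiled" candidate exponents
  set s : Finset ℕ := (Finset.Icc 1 (N + 1)).filter
    (fun k => ∃ x ∈ ξ.support, a < R ^ k * x ∧ R ^ k * x < b) with hs_def
  set φ : ℝ → ℕ := fun x =>
    if h : ∃ k ∈ Finset.Icc 1 (N + 1), a < R ^ k * x ∧ R ^ k * x < b then h.choose else 0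
    with hφ_def
  have hsub : s ⊆ ξ.support.image φ := by
    intro k hk
    rw [hs_def, Finset.mem_filter] at hk
    obtain ⟨hkIcc, x, hxS, hbad⟩ := hk
    have hex : ∃ k ∈ Finset.Icc 1 (N + 1), a < R ^ k * x ∧ R ^ k * x < b := ⟨k, hkIcc, hbad⟩
    have hφx : φ x = k := by
      rw [hφ_def]
      simp only [dif_pos hex]
      exact huniq x _ k hex.choose_spec.2 hbad
    exact Finset.mem_image.mpr ⟨x, hxS, hφx⟩
  have hcards : s.card ≤ N := by
    calc s.card ≤ (ξ.support.image φ).card := Finset.card_le_card hsub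
      _ ≤ ξ.support.card := Finset.card_image_le
      _ ≤ N := hcard
  -- find an unspoiled candidate
  have hex_k : ∃ k ∈ Finset.Icc 1 (N + 1), k ∉ s := by
    by_contra h
    push_neg at h
    have : Finset.Icc 1 (N + 1) ⊆ s := fun k hk => h k hk
    have := Finset.card_le_card this
    rw [Nat.card_Icc] at this
    omega
  obtain ⟨k, hkIcc, hks⟩ := hex_k
  have hkgood : ∀ x ∈ ξ.support, ¬(a < R ^ k * x ∧ R ^ k * x < b) := by
    intro x hx hbad
    exact hks (by rw [hs_def, Finset.mem_filter]; exact ⟨hkIcc, x, hx, hbad⟩)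
  rw [Finset.mem_Icc] at hkIcc
  set β : ℝ := R ^ k with hβ_def
  have hβ1 : 1 ≤ β := one_le_pow₀ hR1.le
  have hβB : β ≤ B := by
    calc β ≤ R ^ (N + 1) := pow_le_pow_right₀ hR1.le hkIcc.2
      _ ≤ B := hBR
  have hinfo_nonneg : ∀ (ξ' : Design) (β' : ℝ), 0 ≤ expInfo ξ' β' := by
    intro ξ' β'
    apply Finset.sum_nonneg
    intro x hx
    have := ξ'.w_pos x hx
    positivity
  have hbdd : BddBelow (Set.range fun β' : Set.Icc (1:ℝ) B =>
      Real.exp 2 * (β' : ℝ) ^ 2 * expInfo ξ (β' : ℝ)) := by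
    refine ⟨0, ?_⟩
    rintro y ⟨β', rfl⟩
    have := hinfo_nonneg ξ (β' : ℝ)
    positivity
  have hΦle : PhiMaximin B ξ ≤ Real.exp 2 * β ^ 2 * expInfo ξ β :=
    ciInf_le hbdd (⟨β, hβ1, hβB⟩ : Set.Icc (1:ℝ) B)
  refine hΦle.trans ?_
  rw [expInfo, Finset.mul_sum]
  have hterm : ∀ x ∈ ξ.support,
      Real.exp 2 * β ^ 2 * (ξ.w x * (x ^ 2 * Real.exp (-2 * β * x))) ≤ ξ.w x * ε := by
    intro x hx
    obtain ⟨hx0, hx1⟩ := hsupp hx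
    have hw := ξ.w_pos x hx
    have ht0 : 0 ≤ β * x := by positivity
    have hcond : β * x ≤ a ∨ b ≤ β * x := by
      have := hkgood x hx
      rw [not_and_or, not_lt, not_lt] at this
      rw [hβ_def]
      exact this
    have hg := g_small ε (β * x) hε0 hε1 ht0 hcond
    calc Real.exp 2 * β ^ 2 * (ξ.w x * (x ^ 2 * Real.exp (-2 * β * x)))
        = ξ.w x * (Real.exp 2 * (β * x) ^ 2 * Real.exp (-2 * (β * x))) := by ring_nf
      _ ≤ ξ.w x * ε := by
          apply mul_le_mul_of_nonneg_left _ hw.le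
          exact hg
  calc ∑ x ∈ ξ.support, Real.exp 2 * β ^ 2 * (ξ.w x * (x ^ 2 * Real.exp (-2 * β * x)))
      ≤ ∑ x ∈ ξ.support, ξ.w x * ε := Finset.sum_le_sum hterm
    _ = ε := by rw [← Finset.sum_mul, ξ.sum_one, one_mul]

lemma eventually_poly_log_le (C : ℝ) (k : ℕ) :
    ∀ᶠ B in atTop, C * (Real.log B + 1) ^ k ≤ B := by
  have he : (0:ℝ) < Real.exp 1 := Real.exp_pos 1
  have h₁ : Tendsto (fun x : ℝ => Real.log x ^ k / ((Real.exp 1)⁻¹ * x + 0)) atTop (nhds 0) :=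
    Real.tendsto_pow_log_div_mul_add_atTop (Real.exp 1)⁻¹ 0 k (by positivity)
  have h₂ : Tendsto (fun B : ℝ => Real.exp 1 * B) atTop atTop :=
    Tendsto.const_mul_atTop he tendsto_id
  have h₃ : Tendsto (fun B : ℝ =>
      Real.log (Real.exp 1 * B) ^ k / ((Real.exp 1)⁻¹ * (Real.exp 1 * B) + 0)) atTop (nhds 0) :=
    h₁.comp h₂
  have h₄ : Tendsto (fun B : ℝ => (Real.log B + 1) ^ k / B) atTop (nhds 0) := by
    apply h₃.congr'
    filter_upwards [eventually_gt_atTop (0:ℝ)] with B hB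
    rw [Real.log_mul (Real.exp_ne_zero 1) hB.ne', Real.log_exp]
    congr 1
    · ring_nf
    · field_simp; ring
  have h₅ : Tendsto (fun B : ℝ => C * ((Real.log B + 1) ^ k / B)) atTop (nhds 0) := by
    have := h₄.const_mul C
    simpa using this
  have h₆ : ∀ᶠ B in atTop, C * ((Real.log B + 1) ^ k / B) < 1 :=
    h₅.eventually_lt_const one_pos
  filter_upwards [h₆, eventually_gt_atTop (0:ℝ)] with B h hB
  rw [mul_div_assoc'] at h
  have := (div_lt_one hB).mp h
  linarith

lemma R_bound (B : ℝ) (hB : 1 ≤ B) :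
    (4 - Real.log (Real.exp (2 - 2 * Real.exp 1) / (2 * (Real.log B + 1)))) /
      (Real.sqrt (Real.exp (2 - 2 * Real.exp 1) / (2 * (Real.log B + 1))) / Real.exp 1)
      ≤ 40000 * (Real.log B + 1) ^ 2 := by
  have hv : 1 ≤ Real.log B + 1 := by
    have := Real.log_nonneg hB; linarith
  set v : ℝ := Real.log B + 1 with hv_def
  set ε : ℝ := Real.exp (2 - 2 * Real.exp 1) / (2 * v) with hε_def
  have hε0 : 0 < ε := by
    rw [hε_def]; positivity
  have he1 : (2:ℝ) ≤ Real.exp 1 := by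
    have := Real.add_one_le_exp 1; linarith
  have he3 : Real.exp 1 ≤ 3 := by
    have := Real.exp_one_lt_d9; linarith
  have hc1 : Real.exp (2 - 2 * Real.exp 1) ≤ 1 := by
    rw [Real.exp_le_one_iff]; linarith
  have hε1 : ε ≤ 1 := by
    rw [hε_def, div_le_one (by positivity)]
    linarith
  have hinv : ε⁻¹ = 2 * v * Real.exp (2 * Real.exp 1 - 2) := by
    rw [hε_def, inv_div, div_eq_mul_inv, ← Real.exp_neg]
    congr 1
    ring
  have hexp4 : Real.exp (2 * Real.exp 1 - 2) ≤ 55 := by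
    have h1 : Real.exp (2 * Real.exp 1 - 2) ≤ Real.exp 4 := by
      apply Real.exp_le_exp.mpr; linarith
    have h2 : Real.exp 4 = Real.exp 1 ^ 4 := by
      rw [← Real.exp_nat_mul]; norm_num
    have h3 : Real.exp 1 ^ 4 ≤ (2.7182818286 : ℝ) ^ 4 := by
      apply pow_le_pow_left₀ (Real.exp_pos 1).le Real.exp_one_lt_d9.le
    have h4 : (2.7182818286 : ℝ) ^ 4 ≤ 55 := by norm_num
    linarith
  have hinv_le : ε⁻¹ ≤ 110 * v := by
    rw [hinv]
    nlinarith
  have hinv1 : 1 ≤ ε⁻¹ := by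
    rw [← one_div, le_div_iff₀ hε0, one_mul]; exact hε1
  have hsqrt : Real.sqrt ε⁻¹ ≤ 110 * v := by
    have h1 : ε⁻¹ ≤ (ε⁻¹) ^ 2 := by nlinarith
    calc Real.sqrt ε⁻¹ ≤ Real.sqrt ((ε⁻¹) ^ 2) := Real.sqrt_le_sqrt h1
      _ = ε⁻¹ := Real.sqrt_sq (by linarith)
      _ ≤ 110 * v := hinv_le
  have hlogε : Real.log ε ≤ 0 := Real.log_nonpos hε0.le hε1
  have hb : 4 - Real.log ε ≤ 114 * v := by
    have h1 : -Real.log ε = Real.log ε⁻¹ := (Real.log_inv ε).symm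
    have h2 : Real.log ε⁻¹ ≤ ε⁻¹ - 1 := Real.log_le_sub_one_of_pos (by positivity)
    have h3 : -Real.log ε ≤ 110 * v - 1 := by
      rw [h1]; linarith
    linarith
  have hsε : 0 < Real.sqrt ε := Real.sqrt_pos.mpr hε0
  have heq : (4 - Real.log ε) / (Real.sqrt ε / Real.exp 1)
      = (4 - Real.log ε) * Real.exp 1 * Real.sqrt ε⁻¹ := by
    rw [Real.sqrt_inv, div_div_eq_mul_div, mul_div_assoc, div_eq_mul_inv]
    ring
  rw [heq]
  calc (4 - Real.log ε) * Real.exp 1 * Real.sqrt ε⁻¹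
      ≤ (114 * v) * 3 * (110 * v) := by
        apply mul_le_mul _ hsqrt (Real.sqrt_nonneg _) (by positivity)
        apply mul_le_mul hb he3 (Real.exp_pos 1).le (by positivity)
    _ ≤ 40000 * v ^ 2 := by nlinarith

/-- For the one-parameter exponential model on `[0,1]`: for every `N` there is `B₀ ≥ 1`
such that for all `B ≥ B₀`, every standardized maximin `D`-optimal design for the
parameter space `[1,B]` is supported at more than `N` points. -/
theorem exp_model_maximin_support_unbounded (N : ℕ) :
    ∃ B₀ : ℝ, 1 ≤ B₀ ∧
      ∀ B : ℝ, B₀ ≤ B →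
        ∀ ξstar : Design, ↑ξstar.support ⊆ Set.Icc (0 : ℝ) 1 →
          (∀ ξ : Design, ↑ξ.support ⊆ Set.Icc (0 : ℝ) 1 →
            PhiMaximin B ξ ≤ PhiMaximin B ξstar) →
          N < ξstar.support.card := by
  obtain ⟨B₀', hB₀'⟩ := Filter.eventually_atTop.mp
    (eventually_poly_log_le ((40000 : ℝ) ^ (N + 1)) (2 * (N + 1)))
  refine ⟨max B₀' 1, le_max_right _ _, ?_⟩
  intro B hB ξstar hsuppstar hopt
  by_contra hcard
  push_neg at hcard
  have hB1 : (1 : ℝ) ≤ B := le_trans (le_max_right _ _) hB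
  have hv : 1 ≤ Real.log B + 1 := by
    have := Real.log_nonneg hB1; linarith
  set v : ℝ := Real.log B + 1 with hv_def
  set c : ℝ := Real.exp (2 - 2 * Real.exp 1) with hc_def
  have hc0 : 0 < c := Real.exp_pos _
  have he1 : (2:ℝ) ≤ Real.exp 1 := by
    have := Real.add_one_le_exp 1; linarith
  have hc1 : c ≤ 1 := by
    rw [hc_def, Real.exp_le_one_iff]; linarith
  set ε : ℝ := c / (2 * v) with hε_def
  have hε0 : 0 < ε := by rw [hε_def]; positivity
  have hε1 : ε ≤ 1 := by
    rw [hε_def, div_le_one (by positivity)]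
    linarith
  have hpoly : (40000 : ℝ) ^ (N + 1) * v ^ (2 * (N + 1)) ≤ B :=
    hB₀' B (le_trans (le_max_left _ _) hB)
  have hR0 : 0 ≤ (4 - Real.log ε) / (Real.sqrt ε / Real.exp 1) := by
    have hlogε : Real.log ε ≤ 0 := Real.log_nonpos hε0.le hε1
    apply div_nonneg (by linarith)
    positivity
  have hRB : ((4 - Real.log ε) / (Real.sqrt ε / Real.exp 1)) ^ (N + 1) ≤ B := by
    calc ((4 - Real.log ε) / (Real.sqrt ε / Real.exp 1)) ^ (N + 1)
        ≤ (40000 * v ^ 2) ^ (N + 1) := by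
          apply pow_le_pow_left₀ hR0
          exact R_bound B hB1
      _ = (40000 : ℝ) ^ (N + 1) * v ^ (2 * (N + 1)) := by
          rw [mul_pow, ← pow_mul, mul_comm 2 (N+1)]
      _ ≤ B := hpoly
  have hupper : PhiMaximin B ξstar ≤ ε :=
    phi_le B N ξstar hsuppstar hcard ε hε0 hε1 hRB
  obtain ⟨ξ, hξsupp, hξlow⟩ := exists_good_design B hB1
  have hcomp : PhiMaximin B ξ ≤ PhiMaximin B ξstar := hopt ξ hξsupp
  have hlt : ε < c / v := by
    rw [hε_def, div_lt_div_iff₀ (by positivity) (by positivity)]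
    nlinarith
  have hξlow' : c / v ≤ PhiMaximin B ξ := hξlow
  linarith
end

section
/- For every N ∈ ℕ there exists B₀ ≥ 1 such that for all B ≥ B₀ the following holds: every finitely supported probability measure ξ* on [0,1] that maximizes the Bayesian D-criterion Ψ_B(ξ) = ∫₁^B log( e²β² ∫₀¹ x² e^{−2βx} dξ(x) ) dβ (corresponding to the uniform prior on [1,B]; the integrand may equal −∞) over all finitely supported probability measures ξ on [0,1] is supported at more than N points. -/
open scoped BigOperators ENNReal

noncomputable def negLog (r : ℝ) : ℝ≥0∞ :=
  if r ≤ 0 then ⊤ else ENNReal.ofReal (-Real.log r)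

noncomputable def bayesLoss (B : ℝ) (ξ : Design) : ℝ≥0∞ :=
  ∫⁻ β in Set.Icc (1 : ℝ) B, negLog (Real.exp 2 * β ^ 2 * expInfo ξ β)

open MeasureTheory

/-! ### Auxiliary analytic lemmas -/

lemma log_le_two_sqrt {v : ℝ} (hv : 0 < v) : Real.log v ≤ 2 * Real.sqrt v - 2 := by
  have h1 : Real.log (Real.sqrt v) ≤ Real.sqrt v - 1 :=
    Real.log_le_sub_one_of_pos (Real.sqrt_pos.mpr hv)
  have h2 : Real.log (Real.sqrt v) = Real.log v / 2 := Real.log_sqrt hv.le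
  linarith

lemma log_le_half {t : ℝ} (ht : 0 < t) : Real.log t ≤ t / 2 := by
  have h1 := log_le_two_sqrt ht
  have h2 : Real.sqrt t ^ 2 = t := Real.sq_sqrt ht.le
  nlinarith [sq_nonneg (Real.sqrt t - 2), Real.sqrt_nonneg t]

lemma log_ge_one_sub_inv {t : ℝ} (ht : 0 < t) : 1 - 1/t ≤ Real.log t := by
  have h := Real.log_le_sub_one_of_pos (show (0:ℝ) < 1/t by positivity)
  rw [Real.log_div one_ne_zero ht.ne', Real.log_one] at h
  linarith

/-! ### negLog lemmas -/

lemma negLog_of_pos {r : ℝ} (hr : 0 < r) : negLog r = ENNReal.ofReal (-Real.log r) := by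
  simp [negLog, not_le.mpr hr]

lemma negLog_le_of_le {s r : ℝ} (hs : 0 < s) (h : s ≤ r) :
    negLog r ≤ ENNReal.ofReal (-Real.log s) := by
  rw [negLog_of_pos (lt_of_lt_of_le hs h)]
  exact ENNReal.ofReal_le_ofReal (by
    have := Real.log_le_log hs h
    linarith)

lemma le_negLog {r a : ℝ} (h : r ≤ Real.exp (-a)) : ENNReal.ofReal a ≤ negLog r := by
  unfold negLog
  split_ifs with h0
  · exact le_top
  · push_neg at h0
    apply ENNReal.ofReal_le_ofReal
    have : Real.log r ≤ -a := by
      calc Real.log r ≤ Real.log (Real.exp (-a)) := Real.log_le_log h0 h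
      _ = -a := Real.log_exp _
    linarith

lemma negLog_measurable : Measurable negLog := by
  unfold negLog
  exact Measurable.ite (measurableSet_le measurable_id measurable_const)
    measurable_const (ENNReal.measurable_ofReal.comp Real.measurable_log.neg)

/-! ### bounds on G(t) = e^2 t^2 e^{-2t} -/

lemma Gbound_big {t K : ℝ} (hK : 0 ≤ K) (ht : 2*K + 2 ≤ t) :
    Real.exp 2 * t^2 * Real.exp (-(2*t)) ≤ Real.exp (-(2*K)) := by
  have ht0 : 0 < t := by linarith
  have h1 : Real.exp (2 * Real.log t) = t^2 := by
    rw [two_mul, Real.exp_add, Real.exp_log ht0]; ring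
  have h2 : Real.log t ≤ t/2 := log_le_half ht0
  calc Real.exp 2 * t^2 * Real.exp (-(2*t))
      = Real.exp (2 + 2*Real.log t + -(2*t)) := by
        rw [← h1, ← Real.exp_add, ← Real.exp_add]
    _ ≤ Real.exp (-(2*K)) := by
        apply Real.exp_le_exp.mpr; linarith

lemma Gbound_small {t K : ℝ} (ht0 : 0 ≤ t) (ht : t ≤ Real.exp (-(1+K))) :
    Real.exp 2 * t^2 * Real.exp (-(2*t)) ≤ Real.exp (-(2*K)) := by
  have h1 : Real.exp (-(2*t)) ≤ 1 := Real.exp_le_one_iff.mpr (by linarith)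
  have h2 : t^2 ≤ Real.exp (-(1+K))^2 := by
    apply sq_le_sq' <;> nlinarith [Real.exp_pos (-(1+K))]
  calc Real.exp 2 * t^2 * Real.exp (-(2*t)) ≤ Real.exp 2 * Real.exp (-(1+K))^2 * 1 := by
        apply mul_le_mul _ h1 (by positivity) (by positivity)
        apply mul_le_mul_of_nonneg_left h2 (Real.exp_pos 2).le
    _ = Real.exp (-(2*K)) := by
        rw [← Real.exp_nat_mul]
        push_cast
        rw [← Real.exp_add]
        ring_nf

/-! ### Design lemmas -/

lemma Design.w_nonneg (ξ : Design) (x : ℝ) : 0 ≤ ξ.w x := by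
  by_cases hx : x ∈ ξ.support
  · exact (ξ.w_pos x hx).le
  · rw [ξ.w_zero x hx]

lemma expInfo_nonneg (ξ : Design) (β : ℝ) : 0 ≤ expInfo ξ β := by
  apply Finset.sum_nonneg
  intro x _
  have := ξ.w_nonneg x
  positivity

/-- key sum identity for mixtures -/
lemma mix_sum (ξ : Design) (x₀ α : ℝ) (φ : ℝ → ℝ) :
    ∑ x ∈ insert x₀ ξ.support, ((1-α) * ξ.w x + if x = x₀ then α else 0) * φ x
      = (1-α) * ∑ x ∈ ξ.support, ξ.w x * φ x + α * φ x₀ := by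
  have h1 : ∀ x, ((1-α) * ξ.w x + if x = x₀ then α else 0) * φ x
      = (1-α) * (ξ.w x * φ x) + (if x = x₀ then α * φ x else 0) := by
    intro x; split_ifs <;> ring
  rw [Finset.sum_congr rfl (fun x _ => h1 x), Finset.sum_add_distrib, ← Finset.mul_sum,
    Finset.sum_ite_eq' (insert x₀ ξ.support) x₀ (fun x => α * φ x),
    if_pos (Finset.mem_insert_self x₀ ξ.support)]
  congr 1
  by_cases hx : x₀ ∈ ξ.support
  · rw [Finset.insert_eq_self.mpr hx]
  · rw [Finset.sum_insert hx, ξ.w_zero x₀ hx]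
    ring

/-- mixture of a design with a point mass at `x₀`. -/
noncomputable def mix (ξ : Design) (x₀ α : ℝ) (h0 : 0 < α) (h1 : α < 1) : Design where
  support := insert x₀ ξ.support
  w := fun x => (1-α) * ξ.w x + if x = x₀ then α else 0
  w_pos := by
    intro x hx
    rcases Finset.mem_insert.mp hx with h | h
    · subst h
      have := ξ.w_nonneg x
      rw [if_pos rfl]
      nlinarith
    · have := ξ.w_pos x h
      have h2 : (0:ℝ) ≤ if x = x₀ then α else 0 := by positivity
      nlinarith
  w_zero := by
    intro x hx
    rw [Finset.mem_insert] at hx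
    push_neg at hx
    rw [ξ.w_zero x hx.2, if_neg hx.1]
    ring
  sum_one := by
    have h := mix_sum ξ x₀ α (fun _ => 1)
    simp only [mul_one] at h
    rw [ξ.sum_one] at h
    rw [h]; ring

lemma mix_expInfo (ξ : Design) (x₀ α : ℝ) (h0 : 0 < α) (h1 : α < 1) (β : ℝ) :
    expInfo (mix ξ x₀ α h0 h1) β
      = (1-α) * expInfo ξ β + α * (x₀^2 * Real.exp (-2*β*x₀)) := by
  exact mix_sum ξ x₀ α (fun x => x^2 * Real.exp (-2*β*x))

/-! ### The candidate sequence -/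

noncomputable def cseq (B : ℝ) : ℕ → ℝ
  | 0 => 2
  | k+1 => 6 * (Real.log (8*B)/2 + 1) * Real.exp (1 + Real.log (16*B / cseq B k)/2)
      * cseq B k

lemma cseq_pos {B : ℝ} (hB : 1 ≤ B) : ∀ k, 0 < cseq B k := by
  intro k
  induction k with
  | zero => norm_num [cseq]
  | succ k ih =>
    rw [cseq]
    have hK0 : 0 ≤ Real.log (8*B) := Real.log_nonneg (by linarith)
    positivity

lemma cseq_log {B : ℝ} (hB : 1 ≤ B) (k : ℕ) :
    Real.log (cseq B (k+1))
      = (Real.log 6 + Real.log (Real.log (8*B)/2 + 1) + 1 + Real.log (16*B)/2)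
        + Real.log (cseq B k) / 2 := by
  have hc := cseq_pos hB k
  have hK0 : 0 ≤ Real.log (8*B) := Real.log_nonneg (by linarith)
  have h1 : (6 : ℝ) * (Real.log (8*B)/2 + 1) ≠ 0 := by positivity
  have h2 : Real.exp (1 + Real.log (16*B / cseq B k)/2) ≠ 0 := (Real.exp_pos _).ne'
  rw [cseq, Real.log_mul (by positivity) hc.ne', Real.log_mul h1 h2,
    Real.log_mul (by norm_num) (by positivity), Real.log_exp,
    Real.log_div (by positivity) hc.ne']
  ring

lemma cseq_log_closed {B : ℝ} (hB : 1 ≤ B) (k : ℕ) :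
    Real.log (cseq B k)
      = 2 * (Real.log 6 + Real.log (Real.log (8*B)/2 + 1) + 1 + Real.log (16*B)/2)
        - (2 * (Real.log 6 + Real.log (Real.log (8*B)/2 + 1) + 1 + Real.log (16*B)/2)
            - Real.log 2) * (1/2)^k := by
  induction k with
  | zero => norm_num [cseq]
  | succ k ih =>
    rw [cseq_log hB k, ih]
    ring

set_option maxHeartbeats 2000000 in
lemma cseq_bounds {N : ℕ} {B : ℝ} (hB : Real.exp ((2:ℝ)^(2*N+8)) ≤ B) :
    ∀ k ≤ N, 2 ≤ cseq B k ∧ cseq B k ≤ 2/3 * B := by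
  have hB1 : 1 ≤ B := le_trans (Real.one_le_exp (by positivity)) hB
  have hB0 : (0:ℝ) < B := by linarith
  have hlogB : (2:ℝ)^(2*N+8) ≤ Real.log B := (Real.le_log_iff_exp_le hB0).mpr hB
  have h256 : (256:ℝ) ≤ Real.log B := by
    calc (256:ℝ) = 2^8 := by norm_num
    _ ≤ 2^(2*N+8) := by
        apply pow_le_pow_right₀ (by norm_num)
        omega
    _ ≤ Real.log B := hlogB
  -- abbreviations
  set lB := Real.log B with hlB
  have hlog8 : Real.log (8*B) = Real.log 8 + lB := Real.log_mul (by norm_num) hB0.ne'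
  have hlog16 : Real.log (16*B) = Real.log 16 + lB := Real.log_mul (by norm_num) hB0.ne'
  have h8 : (0:ℝ) ≤ Real.log 8 := Real.log_nonneg (by norm_num)
  have h8' : Real.log 8 ≤ 7 := by linarith [Real.log_le_sub_one_of_pos (show (0:ℝ) < 8 by norm_num)]
  have h16 : (0:ℝ) ≤ Real.log 16 := Real.log_nonneg (by norm_num)
  have h16' : Real.log 16 ≤ 15 := by linarith [Real.log_le_sub_one_of_pos (show (0:ℝ) < 16 by norm_num)]
  have h6 : (0:ℝ) ≤ Real.log 6 := Real.log_nonneg (by norm_num)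
  have h6' : Real.log 6 ≤ 5 := by linarith [Real.log_le_sub_one_of_pos (show (0:ℝ) < 6 by norm_num)]
  have h3' : Real.log 3 ≤ 2 := by linarith [Real.log_le_sub_one_of_pos (show (0:ℝ) < 3 by norm_num)]
  have h2l : (0:ℝ) ≤ Real.log 2 := Real.log_nonneg (by norm_num)
  have h2l' : Real.log 2 ≤ 1 := by linarith [Real.log_le_sub_one_of_pos (show (0:ℝ) < 2 by norm_num)]
  have hK0 : (0:ℝ) ≤ Real.log (8*B)/2 := by rw [hlog8]; linarith
  have hK0' : Real.log (8*B)/2 + 1 ≤ lB := by rw [hlog8]; linarith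
  -- bound on log (K0 + 1)
  have hK1 : (0:ℝ) < Real.log (8*B)/2 + 1 := by linarith
  have hr2 : Real.sqrt lB ^ 2 = lB := Real.sq_sqrt (by linarith)
  have hr0 : 0 ≤ Real.sqrt lB := Real.sqrt_nonneg _
  have hlogK0 : Real.log (Real.log (8*B)/2 + 1) ≤ 2 * Real.sqrt lB := by
    calc Real.log (Real.log (8*B)/2 + 1) ≤ 2 * Real.sqrt (Real.log (8*B)/2 + 1) - 2 :=
        log_le_two_sqrt hK1
    _ ≤ 2 * Real.sqrt lB - 2 := by
        have := Real.sqrt_le_sqrt hK0'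
        linarith
    _ ≤ 2 * Real.sqrt lB := by linarith
  have hlogK0' : (0:ℝ) ≤ Real.log (Real.log (8*B)/2 + 1) := Real.log_nonneg (by linarith)
  -- the key numeric inequality
  set L := Real.log 6 + Real.log (Real.log (8*B)/2 + 1) + 1 + Real.log (16*B)/2 with hL
  have hs : ∀ k : ℕ, k ≤ N → ((1:ℝ)/2)^N ≤ ((1:ℝ)/2)^k := by
    intro k hk
    exact pow_le_pow_of_le_one (by norm_num) (by norm_num) hk
  have hLlow : lB ≤ 2*L - Real.log 2 := by
    rw [hL, hlog16]; linarith
  have hr16 : (2:ℝ)^(N+4) ≤ Real.sqrt lB := by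
    have hsq : ((2:ℝ)^(N+4))^2 = 2^(2*N+8) := by
      rw [← pow_mul]; ring_nf
    calc (2:ℝ)^(N+4) = Real.sqrt (((2:ℝ)^(N+4))^2) := (Real.sqrt_sq (by positivity)).symm
    _ ≤ Real.sqrt lB := Real.sqrt_le_sqrt (by rw [hsq]; exact hlogB)
  have hnum : 2*L - (2*L - Real.log 2) * (1/2)^N ≤ Real.log (2/3*B) := by
    have hlog23 : Real.log (2/3*B) = Real.log 2 - Real.log 3 + lB := by
      rw [show (2:ℝ)/3*B = 2/3*B from rfl, Real.log_mul (by norm_num) hB0.ne',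
        Real.log_div (by norm_num) (by norm_num)]
    have hsN0 : (0:ℝ) < (1/2)^N := by positivity
    have hsrB : ((1:ℝ)/2)^N * lB ≤ ((1:ℝ)/2)^N * (2*L - Real.log 2) :=
      mul_le_mul_of_nonneg_left hLlow hsN0.le
    have hcomm : (2*L - Real.log 2) * (1/2)^N = ((1:ℝ)/2)^N * (2*L - Real.log 2) :=
      mul_comm _ _
    -- suffices : 2L ≤ log2 - log3 + lB + (1/2)^N * lB
    have hp1 : (1:ℝ) ≤ (2:ℝ)^N := one_le_pow₀ (by norm_num : (1:ℝ) ≤ 2)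
    have hhalf : ((1:ℝ)/2)^N = ((2:ℝ)^N)⁻¹ := by
      rw [one_div, inv_pow]
    have hrr : 16 * (2:ℝ)^N ≤ Real.sqrt lB := by
      calc 16 * (2:ℝ)^N = 2^(N+4) := by ring
      _ ≤ Real.sqrt lB := hr16
    have hr16' : (16:ℝ) ≤ Real.sqrt lB := le_trans (by nlinarith) hrr
    have hcore : 29 + 4 * Real.sqrt lB ≤ ((1:ℝ)/2)^N * lB := by
      rw [hhalf, inv_mul_eq_div, le_div_iff₀ (by positivity)]
      nlinarith [hr2, mul_le_mul_of_nonneg_right hrr hr0,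
        mul_nonneg (show (0:ℝ) ≤ (2:ℝ)^N by positivity) (show (0:ℝ) ≤ 12*Real.sqrt lB - 29 by linarith)]
    have h2L : 2*L ≤ 27 + 4*Real.sqrt lB + lB := by
      rw [hL, hlog16]; linarith
    rw [hlog23]
    linarith
  -- upper bound for all k ≤ N
  have hupper : ∀ k ≤ N, cseq B k ≤ 2/3 * B := by
    intro k hk
    have hck := cseq_pos hB1 k
    have h1 : Real.log (cseq B k) ≤ Real.log (2/3*B) := by
      rw [cseq_log_closed hB1 k]
      have h2 : (2*L - Real.log 2) * (1/2)^N ≤ (2*L - Real.log 2) * (1/2)^k :=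
        mul_le_mul_of_nonneg_left (hs k hk) (by linarith)
      rw [← hL]
      linarith [hnum]
    calc cseq B k = Real.exp (Real.log (cseq B k)) := (Real.exp_log hck).symm
    _ ≤ Real.exp (Real.log (2/3*B)) := Real.exp_le_exp.mpr h1
    _ = 2/3*B := Real.exp_log (by linarith)
  have hlower : ∀ k ≤ N, 2 ≤ cseq B k := by
    intro k
    induction k with
    | zero => intro _; norm_num [cseq]
    | succ k ih =>
      intro hk
      have hk' : k ≤ N := by omega
      have h2 := ih hk'
      have hup := hupper k hk'
      rw [cseq]
      have he : 1 ≤ Real.exp (1 + Real.log (16*B / cseq B k)/2) := by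
        apply Real.one_le_exp
        have h3 : (1:ℝ) ≤ 16*B / cseq B k := by
          rw [le_div_iff₀ (by linarith)]
          linarith
        have := Real.log_nonneg h3
        linarith
      calc (2:ℝ) ≤ cseq B k := h2
      _ ≤ 6 * (Real.log (8*B)/2 + 1) * Real.exp (1 + Real.log (16*B / cseq B k)/2)
            * cseq B k := by
          apply le_mul_of_one_le_left (by linarith)
          nlinarith [mul_le_mul_of_nonneg_left he
            (show (0:ℝ) ≤ 6*(Real.log (8*B)/2+1) by linarith)]
  intro k hk
  exact ⟨hlower k hk, hupper k hk⟩

/-! ### annulus bounds -/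

noncomputable def Kf (B c : ℝ) : ℝ := Real.log (16*B/c) / 2
noncomputable def lo (B : ℝ) (k : ℕ) : ℝ := cseq B k / (4 * Kf B (cseq B k) + 4)
noncomputable def hi (B : ℝ) (k : ℕ) : ℝ :=
  3/2 * Real.exp (1 + Kf B (cseq B k)) * cseq B k

lemma exp_two_le : Real.exp 2 ≤ 24 := by
  have h := Real.exp_one_lt_d9
  calc Real.exp 2 = Real.exp 1 * Real.exp 1 := by rw [← Real.exp_add]; norm_num
  _ ≤ 24 := by nlinarith [Real.exp_pos 1]

lemma Kf_ge_one {B c : ℝ} (hB : 0 < B) (hc2 : 2 ≤ c) (hcB : c ≤ 2/3 * B) :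
    1 ≤ Kf B c := by
  have hc0 : (0:ℝ) < c := by linarith
  have h24 : (24:ℝ) ≤ 16*B/c := by
    rw [le_div_iff₀ hc0]
    linarith
  have hlog : Real.log 24 ≤ Real.log (16*B/c) := Real.log_le_log (by norm_num) h24
  have h2 : (2:ℝ) ≤ Real.log 24 := by
    rw [← Real.log_exp 2]
    exact Real.log_le_log (Real.exp_pos 2) exp_two_le
  unfold Kf
  linarith

lemma Kf_le_K0 {B c : ℝ} (hB : 0 < B) (hc2 : 2 ≤ c) :
    Kf B c ≤ Real.log (8*B) / 2 := by
  have hc0 : (0:ℝ) < c := by linarith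
  have h1 : 16*B/c ≤ 8*B := by
    rw [div_le_iff₀ hc0]
    nlinarith
  have h2 : Real.log (16*B/c) ≤ Real.log (8*B) := Real.log_le_log (by positivity) h1
  unfold Kf
  linarith

lemma hi_le_lo_succ {N : ℕ} {B : ℝ} (hB : Real.exp ((2:ℝ)^(2*N+8)) ≤ B)
    {k : ℕ} (hk : k + 1 ≤ N) : hi B k ≤ lo B (k+1) := by
  have hB1 : 1 ≤ B := le_trans (Real.one_le_exp (by positivity)) hB
  have hB0 : (0:ℝ) < B := by linarith
  obtain ⟨hc2, hcB⟩ := cseq_bounds hB (k+1) hk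
  obtain ⟨hc2', hcB'⟩ := cseq_bounds hB k (by omega)
  have hK1 : 1 ≤ Kf B (cseq B (k+1)) := Kf_ge_one hB0 hc2 hcB
  have hKle : Kf B (cseq B (k+1)) ≤ Real.log (8*B)/2 := Kf_le_K0 hB0 hc2
  have hK0n : (0:ℝ) ≤ Real.log (8*B) := Real.log_nonneg (by linarith)
  have hden0 : (0:ℝ) < 4*(Real.log (8*B)/2)+4 := by linarith
  have h1 : cseq B (k+1)/(4*(Real.log (8*B)/2)+4) ≤ lo B (k+1) := by
    unfold lo
    apply div_le_div_of_nonneg_left (by linarith) (by linarith) (by linarith)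
  have h2 : hi B k = cseq B (k+1)/(4*(Real.log (8*B)/2)+4) := by
    unfold hi Kf
    rw [cseq]
    rw [eq_div_iff (by linarith)]
    ring
  linarith

lemma lo_le_hi {N : ℕ} {B : ℝ} (hB : Real.exp ((2:ℝ)^(2*N+8)) ≤ B)
    {k : ℕ} (hk : k ≤ N) : lo B k ≤ hi B k := by
  have hB1 : 1 ≤ B := le_trans (Real.one_le_exp (by positivity)) hB
  have hB0 : (0:ℝ) < B := by linarith
  obtain ⟨hc2, hcB⟩ := cseq_bounds hB k hk
  have hK1 : 1 ≤ Kf B (cseq B k) := Kf_ge_one hB0 hc2 hcB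
  have hE : 1 ≤ Real.exp (1 + Kf B (cseq B k)) := Real.one_le_exp (by linarith)
  unfold lo hi
  have hden : (0:ℝ) < 4*Kf B (cseq B k) + 4 := by linarith
  calc cseq B k / (4*Kf B (cseq B k) + 4) ≤ cseq B k / 8 := by
        apply div_le_div_of_nonneg_left (by linarith) (by norm_num) (by linarith)
  _ ≤ 3/2 * Real.exp (1 + Kf B (cseq B k)) * cseq B k := by nlinarith

lemma hi_le_lo_chain {N : ℕ} {B : ℝ} (hB : Real.exp ((2:ℝ)^(2*N+8)) ≤ B) :
    ∀ k ≤ N, ∀ j < k, hi B j ≤ lo B k := by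
  intro k
  induction k with
  | zero => intro _ j hj; omega
  | succ k ih =>
    intro hk j hj
    rcases Nat.lt_succ_iff_lt_or_eq.mp hj with h | h
    · calc hi B j ≤ lo B k := ih (by omega) j h
      _ ≤ hi B k := lo_le_hi hB (by omega)
      _ ≤ lo B (k+1) := hi_le_lo_succ hB hk
    · subst h
      exact hi_le_lo_succ hB hk

set_option maxHeartbeats 2000000 in
/-- For the one-parameter exponential model on `[0,1]`: for every `N` there is `B₀ ≥ 1`
such that for all `B ≥ B₀`, every Bayesian `D`-optimal design with respect to the
uniform prior on `[1,B]` is supported at more than `N` points. -/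
theorem exp_model_bayes_support_unbounded (N : ℕ) :
    ∃ B₀ : ℝ, 1 ≤ B₀ ∧
      ∀ B : ℝ, B₀ ≤ B →
        ∀ ξstar : Design, ↑ξstar.support ⊆ Set.Icc (0 : ℝ) 1 →
          (∀ ξ : Design, ↑ξ.support ⊆ Set.Icc (0 : ℝ) 1 →
            bayesLoss B ξstar ≤ bayesLoss B ξ) →
          N < ξstar.support.card := by
  refine ⟨Real.exp ((2:ℝ)^(2*N+8)), Real.one_le_exp (by positivity), ?_⟩
  intro B hB ξ hsub hopt
  by_contra hcard
  push_neg at hcard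
  have hB1 : 1 ≤ B := le_trans (Real.one_le_exp (by positivity)) hB
  have hB0 : (0:ℝ) < B := by linarith
  -- find a free candidate
  have hfree : ∃ k ≤ N, ∀ x ∈ ξ.support, 0 < x →
      1/x ≤ lo B k ∨ hi B k ≤ 1/x := by
    by_contra hblock
    push_neg at hblock
    set F : ℕ → ℝ := fun k =>
      if h : ∃ x, x ∈ ξ.support ∧ (0 < x ∧ lo B k < 1/x ∧ 1/x < hi B k)
      then h.choose else 0 with hF
    have hFspec : ∀ k ≤ N, F k ∈ ξ.support ∧ 0 < F k ∧
        lo B k < 1/(F k) ∧ 1/(F k) < hi B k := by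
      intro k hk
      obtain ⟨x, hx, hx0, hx1, hx2⟩ := hblock k hk
      have h : ∃ x, x ∈ ξ.support ∧ (0 < x ∧ lo B k < 1/x ∧ 1/x < hi B k) :=
        ⟨x, hx, hx0, hx1, hx2⟩
      rw [hF]
      simp only [dif_pos h]
      exact ⟨h.choose_spec.1, h.choose_spec.2⟩
    have hmaps : ∀ k ∈ Finset.range (N+1), F k ∈ ξ.support := by
      intro k hk
      rw [Finset.mem_range] at hk
      exact (hFspec k (by omega)).1
    have hcard2 : ξ.support.card < (Finset.range (N+1)).card := by
      rw [Finset.card_range]; omega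
    obtain ⟨i, hi', j, hj', hij, heq⟩ :=
      Finset.exists_ne_map_eq_of_card_lt_of_maps_to hcard2 hmaps
    rw [Finset.mem_range] at hi' hj'
    rcases Ne.lt_or_gt hij with hlt | hlt
    · have h1 := (hFspec i (by omega)).2.2.2
      have h2 := (hFspec j (by omega)).2.2.1
      have h3 := hi_le_lo_chain hB j (by omega) i hlt
      rw [heq] at h1
      linarith
    · have h1 := (hFspec j (by omega)).2.2.2
      have h2 := (hFspec i (by omega)).2.2.1
      have h3 := hi_le_lo_chain hB i (by omega) j hlt
      rw [heq] at h2
      linarith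
  obtain ⟨k, hkN, hfreek⟩ := hfree
  obtain ⟨hc2, hcB⟩ := cseq_bounds hB k hkN
  set c := cseq B k with hc
  have hc0 : (0:ℝ) < c := by linarith
  set K := Kf B c with hK
  have hK1 : (1:ℝ) ≤ K := Kf_ge_one hB0 hc2 hcB
  have h2K : 2*K = Real.log (16*B/c) := by rw [hK]; unfold Kf; ring
  -- the mixture design
  set α := Real.exp (1 - 2*K) with hα
  have hα0 : 0 < α := Real.exp_pos _
  have hα1 : α < 1 := by
    have h := Real.exp_lt_exp.mpr (show (1:ℝ)-2*K < 0 by linarith)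
    rw [Real.exp_zero] at h
    exact h
  have hαhalf : α ≤ 1/2 := by
    rw [hα]
    calc Real.exp (1-2*K) ≤ Real.exp (-1) := Real.exp_le_exp.mpr (by linarith)
    _ ≤ 1/2 := by
        rw [Real.exp_neg]
        rw [inv_le_comm₀ (Real.exp_pos 1) (by norm_num)]
        calc (1/2 : ℝ)⁻¹ = 2 := by norm_num
        _ ≤ Real.exp 1 := by linarith [Real.add_one_le_exp 1]
  set x₀ := 1/c with hx₀
  have hx₀0 : 0 < x₀ := by positivity
  have hx₀1 : x₀ ≤ 1 := by
    rw [hx₀]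
    rw [div_le_one hc0]
    linarith
  set ξα := mix ξ x₀ α hα0 hα1 with hξα
  have hsubα : ↑ξα.support ⊆ Set.Icc (0:ℝ) 1 := by
    rw [hξα]
    show ↑(insert x₀ ξ.support) ⊆ Set.Icc (0:ℝ) 1
    rw [Finset.coe_insert]
    intro y hy
    rcases Set.mem_insert_iff.mp hy with h | h
    · subst h; exact ⟨hx₀0.le, hx₀1⟩
    · exact hsub h
  -- the window
  set W : Set ℝ := Set.Icc (2/3*c) (3/2*c) with hW
  have hWsub : W ⊆ Set.Icc (1:ℝ) B := by
    apply Set.Icc_subset_Icc <;> linarith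
  -- convenient forms of freeness
  have hlo : lo B k = c/(4*K+4) := by unfold lo; rw [← hc, ← hK]
  have hhi : hi B k = 3/2*Real.exp (1+K)*c := by unfold hi; rw [← hc, ← hK]
  -- (P4) level bound on W
  have hlevel : ∀ β ∈ W, Real.exp 2 * β^2 * expInfo ξ β ≤ Real.exp (-(2*K)) := by
    intro β hβ
    obtain ⟨hβ1, hβ2⟩ := hβ
    have hβ0 : 0 < β := by linarith
    have hrw : Real.exp 2 * β^2 * expInfo ξ β
        = ∑ x ∈ ξ.support, ξ.w x * (Real.exp 2 * (β*x)^2 * Real.exp (-(2*(β*x)))) := by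
      rw [expInfo, Finset.mul_sum]
      apply Finset.sum_congr rfl
      intro x _
      rw [show -(2*(β*x)) = -2*β*x from by ring]
      ring
    rw [hrw]
    calc ∑ x ∈ ξ.support, ξ.w x * (Real.exp 2 * (β*x)^2 * Real.exp (-(2*(β*x))))
        ≤ ∑ x ∈ ξ.support, ξ.w x * Real.exp (-(2*K)) := by
          apply Finset.sum_le_sum
          intro x hx
          apply mul_le_mul_of_nonneg_left _ (ξ.w_nonneg x)
          obtain ⟨hx0, hx1⟩ := hsub hx
          rcases eq_or_lt_of_le hx0 with h0 | h0
          · rw [← h0]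
            simp
            positivity
          · rcases hfreek x hx h0 with hcase | hcase
            · -- big x : β x ≥ 2K+2
              rw [hlo] at hcase
              have hd : (0:ℝ) < 4*K+4 := by linarith
              have hxc : 4*K+4 ≤ x*c := by
                rw [div_le_div_iff₀ h0 hd] at hcase
                linarith
              apply Gbound_big (by linarith)
              nlinarith
            · -- small x : β x ≤ e^{-(1+K)}
              rw [hhi] at hcase
              have hE : (0:ℝ) < Real.exp (1+K) := Real.exp_pos _
              have h1 : x * (3/2*Real.exp (1+K)*c) ≤ 1 := by
                have := mul_le_mul_of_nonneg_left hcase h0.le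
                rwa [mul_one_div_cancel h0.ne'] at this
              have h3 : β*x ≤ 3/2*c*x := mul_le_mul_of_nonneg_right hβ2 h0.le
              have h4 : (3/2*c*x) * Real.exp (1+K) ≤ 1 := by
                rw [show (3/2*c*x)*Real.exp (1+K) = x*(3/2*Real.exp (1+K)*c) from by ring]
                exact h1
              have h5 : 3/2*c*x ≤ Real.exp (-(1+K)) := by
                rw [Real.exp_neg, ← one_div, le_div_iff₀ hE]
                exact h4
              have h2 : β*x ≤ Real.exp (-(1+K)) := by linarith
              exact Gbound_small (by positivity) h2
    _ = Real.exp (-(2*K)) := by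
          rw [← Finset.sum_mul, ξ.sum_one, one_mul]
  -- information identity for the mixture
  have hIα : ∀ β : ℝ, Real.exp 2*β^2*expInfo ξα β
      = (1-α)*(Real.exp 2*β^2*expInfo ξ β)
        + α*(Real.exp 2*β^2*(x₀^2*Real.exp (-2*β*x₀))) := by
    intro β
    rw [hξα, mix_expInfo]
    ring
  have hMαlow : ∀ β : ℝ, α*(Real.exp 2*β^2*(x₀^2*Real.exp (-2*β*x₀)))
      ≤ Real.exp 2*β^2*expInfo ξα β := by
    intro β
    rw [hIα β]
    have h1 := expInfo_nonneg ξ β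
    have h3 : (0:ℝ) ≤ (1-α)*(Real.exp 2*β^2*expInfo ξ β) :=
      mul_nonneg (by linarith) (mul_nonneg (mul_nonneg (Real.exp_pos 2).le (sq_nonneg β)) h1)
    linarith
  have hMαlow2 : ∀ β : ℝ, (1-α)*(Real.exp 2*β^2*expInfo ξ β)
      ≤ Real.exp 2*β^2*expInfo ξα β := by
    intro β
    rw [hIα β]
    have h3 : (0:ℝ) ≤ α*(Real.exp 2*β^2*(x₀^2*Real.exp (-2*β*x₀))) := by positivity
    linarith
  -- (P3) lower bound on the candidate information on W
  have hfW : ∀ β ∈ W, Real.exp (-(1/2):ℝ) ≤ Real.exp 2*β^2*(x₀^2*Real.exp (-2*β*x₀)) := by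
    intro β hβ
    obtain ⟨hβ1, hβ2⟩ := hβ
    set t := β/c with ht
    have ht1 : 2/3 ≤ t := by rw [ht, le_div_iff₀ hc0]; linarith
    have ht2 : t ≤ 3/2 := by rw [ht, div_le_iff₀ hc0]; linarith
    have ht0 : 0 < t := by linarith
    have harg : -2*β*x₀ = -(2*t) := by rw [hx₀, ht]; ring
    have heq : Real.exp 2*β^2*(x₀^2*Real.exp (-2*β*x₀)) = Real.exp (2-2*t)*t^2 := by
      rw [harg, show (2-2*t:ℝ) = 2 + -(2*t) from by ring, Real.exp_add, hx₀, ht]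
      field_simp
    rw [heq]
    have hinv : t*(1/t) = 1 := mul_one_div_cancel ht0.ne'
    have h13 : t + 1/t ≤ 13/6 := by
      nlinarith [mul_nonneg (by linarith : (0:ℝ) ≤ t - 2/3) (by linarith : (0:ℝ) ≤ 3/2 - t)]
    have hlogt : 1 - 1/t ≤ Real.log t := log_ge_one_sub_inv ht0
    have ht2exp : Real.exp (2*t - 5/2) ≤ t^2 := by
      have h3 : 2*t - 5/2 ≤ 2*Real.log t := by linarith
      calc Real.exp (2*t-5/2) ≤ Real.exp (2*Real.log t) := Real.exp_le_exp.mpr h3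
      _ = t^2 := by rw [two_mul, Real.exp_add, Real.exp_log ht0]; ring
    calc Real.exp (-(1/2):ℝ) = Real.exp (2-2*t) * Real.exp (2*t-5/2) := by
          rw [← Real.exp_add]; ring_nf
    _ ≤ Real.exp (2-2*t)*t^2 :=
          mul_le_mul_of_nonneg_left ht2exp (Real.exp_pos _).le
  -- (P5) gain on the window
  have hWgain : ∀ β ∈ W, negLog (Real.exp 2*β^2*expInfo ξα β) + ENNReal.ofReal (1/2)
      ≤ negLog (Real.exp 2*β^2*expInfo ξ β) := by
    intro β hβ
    have hαf : (0:ℝ) < α * Real.exp (-(1/2):ℝ) := by positivity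
    have hM : α * Real.exp (-(1/2):ℝ) ≤ Real.exp 2*β^2*expInfo ξα β :=
      le_trans (mul_le_mul_of_nonneg_left (hfW β hβ) hα0.le) (hMαlow β)
    have h1 := negLog_le_of_le hαf hM
    have h2 : -(Real.log (α*Real.exp (-(1/2):ℝ))) = 2*K - 1/2 := by
      rw [Real.log_mul hα0.ne' (Real.exp_pos _).ne', hα, Real.log_exp, Real.log_exp]
      ring
    rw [h2] at h1
    calc negLog (Real.exp 2*β^2*expInfo ξα β) + ENNReal.ofReal (1/2)
        ≤ ENNReal.ofReal (2*K-1/2) + ENNReal.ofReal (1/2) := add_le_add h1 le_rfl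
    _ = ENNReal.ofReal (2*K) := by
        rw [← ENNReal.ofReal_add (by linarith) (by norm_num)]
        norm_num
    _ ≤ negLog (Real.exp 2*β^2*expInfo ξ β) := le_negLog (hlevel β hβ)
  -- (P6) global near-domination
  have hglobal : ∀ β ∈ Set.Icc (1:ℝ) B,
      negLog (Real.exp 2*β^2*expInfo ξα β)
        ≤ negLog (Real.exp 2*β^2*expInfo ξ β) + ENNReal.ofReal (2*α) := by
    intro β hβ
    obtain ⟨hβ1, hβB⟩ := hβ
    by_cases hI : expInfo ξ β ≤ 0
    · have hM0 : Real.exp 2*β^2*expInfo ξ β ≤ 0 :=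
        mul_nonpos_of_nonneg_of_nonpos (by positivity) hI
      have htop : negLog (Real.exp 2*β^2*expInfo ξ β) = ⊤ := by
        unfold negLog; rw [if_pos hM0]
      rw [htop, top_add]
      exact le_top
    · push_neg at hI
      have hβ0 : (0:ℝ) < β := by linarith
      have hMs : 0 < Real.exp 2*β^2*expInfo ξ β :=
        mul_pos (mul_pos (Real.exp_pos 2) (by positivity)) hI
      have h1 := negLog_le_of_le (by nlinarith : 0 < (1-α)*(Real.exp 2*β^2*expInfo ξ β))
        (hMαlow2 β)
      have hexp2α : Real.exp (-(2*α)) ≤ 1-α := by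
        have h5 : 1 ≤ (1-α)*Real.exp (2*α) := by
          nlinarith [Real.add_one_le_exp (2*α), hα0, hαhalf]
        rw [Real.exp_neg, ← one_div, div_le_iff₀ (Real.exp_pos _)]
        linarith [h5]
      have hlog1a : -Real.log (1-α) ≤ 2*α := by
        have h6 := Real.log_le_log (Real.exp_pos (-(2*α))) hexp2α
        rw [Real.log_exp] at h6
        linarith
      have h7 : -Real.log ((1-α)*(Real.exp 2*β^2*expInfo ξ β))
          = -Real.log (1-α) + -(Real.log (Real.exp 2*β^2*expInfo ξ β)) := by
        rw [Real.log_mul (by linarith) hMs.ne']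
        ring
      calc negLog (Real.exp 2*β^2*expInfo ξα β)
          ≤ ENNReal.ofReal (-Real.log ((1-α)*(Real.exp 2*β^2*expInfo ξ β))) := h1
      _ = ENNReal.ofReal (-Real.log (1-α) + -(Real.log (Real.exp 2*β^2*expInfo ξ β))) := by
          rw [h7]
      _ ≤ ENNReal.ofReal (-Real.log (1-α))
            + ENNReal.ofReal (-(Real.log (Real.exp 2*β^2*expInfo ξ β))) :=
          ENNReal.ofReal_add_le
      _ ≤ ENNReal.ofReal (2*α) + negLog (Real.exp 2*β^2*expInfo ξ β) := by
          apply add_le_add (ENNReal.ofReal_le_ofReal hlog1a)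
          rw [negLog_of_pos hMs]
      _ = negLog (Real.exp 2*β^2*expInfo ξ β) + ENNReal.ofReal (2*α) := add_comm _ _
  -- measurability
  have hmeasI : Measurable fun β : ℝ => Real.exp 2*β^2*expInfo ξ β := by
    unfold expInfo
    fun_prop
  have hmeasS : Measurable fun β : ℝ => negLog (Real.exp 2*β^2*expInfo ξ β) :=
    negLog_measurable.comp hmeasI
  have hWmeas : MeasurableSet W := measurableSet_Icc
  -- the indicator integral
  have hind : (∫⁻ β in Set.Icc (1:ℝ) B, W.indicator (fun _ => ENNReal.ofReal (1/2)) β)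
      = ENNReal.ofReal (1/2) * ENNReal.ofReal (3/2*c-2/3*c) := by
    rw [lintegral_indicator hWmeas, setLIntegral_const, Measure.restrict_apply hWmeas,
      Set.inter_eq_self_of_subset_left hWsub, hW, Real.volume_Icc]
  -- the two split identities
  have hsplit : (∫⁻ β in Set.Icc (1:ℝ) B,
        (negLog (Real.exp 2*β^2*expInfo ξα β)
          + W.indicator (fun _ => ENNReal.ofReal (1/2)) β))
      = bayesLoss B ξα + ENNReal.ofReal (1/2) * ENNReal.ofReal (3/2*c-2/3*c) := by
    rw [lintegral_add_right _ (measurable_const.indicator hWmeas), hind, bayesLoss]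
  have hsplit2 : (∫⁻ β in Set.Icc (1:ℝ) B,
        (negLog (Real.exp 2*β^2*expInfo ξ β) + ENNReal.ofReal (2*α)))
      = bayesLoss B ξ + ENNReal.ofReal (2*α) * ENNReal.ofReal (B-1) := by
    rw [lintegral_add_right _ measurable_const, setLIntegral_const, Real.volume_Icc,
      bayesLoss]
  -- pointwise comparison and integration
  have key : bayesLoss B ξα + ENNReal.ofReal (1/2) * ENNReal.ofReal (3/2*c-2/3*c)
      ≤ bayesLoss B ξ + ENNReal.ofReal (2*α) * ENNReal.ofReal (B-1) := by
    rw [← hsplit, ← hsplit2]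
    apply setLIntegral_mono (hmeasS.add measurable_const)
    intro β hβ
    by_cases hβW : β ∈ W
    · rw [Set.indicator_of_mem hβW]
      exact le_trans (hWgain β hβW) (self_le_add_right _ _)
    · rw [Set.indicator_of_notMem hβW, add_zero]
      exact hglobal β hβ
  -- finiteness of the mixture loss
  have hfin : bayesLoss B ξα ≠ ⊤ := by
    have hbound : ∀ β ∈ Set.Icc (1:ℝ) B,
        negLog (Real.exp 2*β^2*expInfo ξα β) ≤ ENNReal.ofReal (2*K+2*B+2*c) := by
      intro β hβ
      obtain ⟨hβ1, hβB⟩ := hβ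
      have hβ0 : (0:ℝ) < β := by linarith
      set t := β/c with ht
      have ht0 : 0 < t := by positivity
      have harg : -2*β*x₀ = -(2*t) := by rw [hx₀, ht]; ring
      have heq : Real.exp 2*β^2*(x₀^2*Real.exp (-2*β*x₀)) = Real.exp (2-2*t)*t^2 := by
        rw [harg, show (2-2*t:ℝ) = 2 + -(2*t) from by ring, Real.exp_add, hx₀, ht]
        field_simp
      have htB : t ≤ B := by
        rw [ht, div_le_iff₀ hc0]
        nlinarith
      have htc : 1/c ≤ t := by
        rw [ht, div_le_div_iff₀ hc0 hc0]
        nlinarith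
      have h1 : Real.exp (2-2*B) ≤ Real.exp (2-2*t) := Real.exp_le_exp.mpr (by linarith)
      have h2 : Real.exp (-(2*c)) ≤ t^2 := by
        have hc_exp : c ≤ Real.exp c := by linarith [Real.add_one_le_exp c]
        have hc_exp2 : c^2 ≤ Real.exp (2*c) := by
          rw [two_mul, Real.exp_add]
          calc c^2 = c*c := sq c
          _ ≤ Real.exp c * Real.exp c :=
              mul_le_mul hc_exp hc_exp hc0.le (Real.exp_pos c).le
        have h3 : Real.exp (-(2*c)) ≤ 1/c^2 := by
          rw [Real.exp_neg, ← one_div]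
          apply div_le_div_of_nonneg_left (by norm_num) (by positivity) hc_exp2
        have h4 : 1/c^2 ≤ t^2 := by
          rw [show (1:ℝ)/c^2 = (1/c)^2 from by ring]
          apply pow_le_pow_left₀ (by positivity) htc
        linarith
      have hflow : Real.exp (-(2*B+2*c-2)) ≤ Real.exp 2*β^2*(x₀^2*Real.exp (-2*β*x₀)) := by
        rw [heq]
        calc Real.exp (-(2*B+2*c-2)) = Real.exp (2-2*B) * Real.exp (-(2*c)) := by
              rw [← Real.exp_add]; ring_nf
        _ ≤ Real.exp (2-2*t)*t^2 :=
              mul_le_mul h1 h2 (Real.exp_pos _).le (Real.exp_pos _).le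
      have hM : α * Real.exp (-(2*B+2*c-2)) ≤ Real.exp 2*β^2*expInfo ξα β :=
        le_trans (mul_le_mul_of_nonneg_left hflow hα0.le) (hMαlow β)
      have h5 := negLog_le_of_le (by positivity) hM
      have h6 : -(Real.log (α*Real.exp (-(2*B+2*c-2)))) = 2*K - 1 + (2*B+2*c-2) := by
        rw [Real.log_mul hα0.ne' (Real.exp_pos _).ne', hα, Real.log_exp, Real.log_exp]
        ring
      rw [h6] at h5
      exact le_trans h5 (ENNReal.ofReal_le_ofReal (by linarith))
    have h7 : bayesLoss B ξα ≤ ENNReal.ofReal (2*K+2*B+2*c) * volume (Set.Icc (1:ℝ) B) := by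
      rw [bayesLoss, ← setLIntegral_const]
      exact setLIntegral_mono measurable_const hbound
    have h8 : ENNReal.ofReal (2*K+2*B+2*c) * volume (Set.Icc (1:ℝ) B) < ⊤ := by
      rw [Real.volume_Icc]
      exact ENNReal.mul_lt_top ENNReal.ofReal_lt_top ENNReal.ofReal_lt_top
    exact (lt_of_le_of_lt h7 h8).ne
  -- conclusion
  have hopt' : bayesLoss B ξ ≤ bayesLoss B ξα := hopt ξα hsubα
  have key2 : bayesLoss B ξα + ENNReal.ofReal (1/2) * ENNReal.ofReal (3/2*c-2/3*c)
      ≤ bayesLoss B ξα + ENNReal.ofReal (2*α) * ENNReal.ofReal (B-1) :=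
    le_trans key (add_le_add hopt' le_rfl)
  have key3 : ENNReal.ofReal (1/2) * ENNReal.ofReal (3/2*c-2/3*c)
      ≤ ENNReal.ofReal (2*α) * ENNReal.ofReal (B-1) :=
    (ENNReal.add_le_add_iff_left hfin).mp key2
  rw [← ENNReal.ofReal_mul (by norm_num), ← ENNReal.ofReal_mul (by positivity)] at key3
  have key4 : 1/2*(3/2*c-2/3*c) ≤ 2*α*(B-1) := by
    rw [ENNReal.ofReal_le_ofReal_iff (by nlinarith)] at key3
    exact key3
  -- numeric contradiction
  have hαval : α = Real.exp 1 * (c/(16*B)) := by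
    rw [hα, show (1-2*K:ℝ) = 1 + -(2*K) from by ring, Real.exp_add,
      show -(2*K) = -Real.log (16*B/c) from by rw [h2K], Real.exp_neg,
      Real.exp_log (by positivity), inv_div]
  have hcontr : 2*α*(B-1) ≤ Real.exp 1 * c/8 := by
    rw [hαval]
    have h8 : 2*(Real.exp 1*(c/(16*B)))*(B-1) = Real.exp 1*c*(B-1)/(8*B) := by
      field_simp
      ring
    rw [h8, div_le_div_iff₀ (by positivity) (by norm_num)]
    nlinarith [mul_pos (Real.exp_pos 1) hc0]
  nlinarith [Real.exp_one_lt_d9, hc0, key4, hcontr]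
end
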